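/- Define the type-3 X_2-Hermite polynomials by Ĥ_0(x) = 1, Ĥ_1 = Ĥ_2 = 0, and for n ≥ 3, Ĥ_n(x) = (-1/2)·i^{-2}·[H_2(ix)(∂-2x)H_{n-3}(x) - (d/dx)(H_2(ix))·H_{n-3}(x)], where H_k is the monic Hermite polynomial (so H_2(ix) = -x^2 - 1/2 times i^2-normalization gives a real polynomial). Then for all n ≥ 0 with n ∉ {1,2} the seven-term recurrence holds: (x^3 + (3/2)x)·Ĥ_n(x) = Ĥ_{n+3}(x) + (3/2)n·Ĥ_{n+1}(x) + (3/4)n(n-3)·Ĥ_{n-1}(x) + (1/8)n(n-4)(n-5)·Ĥ_{n-3}(x), with Ĥ_m := 0 for m < 0. -/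

import Mathlib

open Polynomial

/-- The monic Hermite polynomial `H_n`, defined by the Rodrigues formula
`H_n(x) = ((-1)^n/2^n) e^{x^2} (d/dx)^n e^{-x^2}`; explicitly
`H_n(x) = ∑_m (-1/4)^m n!/(m!(n-2m)!) x^{n-2m}`. -/
noncomputable def hermiteM (n : ℕ) : Polynomial ℝ :=
  ∑ m ∈ Finset.range (n / 2 + 1),
    C ((-1/4 : ℝ)^m * n.factorial / (m.factorial * (n - 2*m).factorial)) * X ^ (n - 2*m)

/-- The monic Hermite polynomial viewed over ℂ. -/
noncomputable def hermiteC (n : ℕ) : Polynomial ℂ := (hermiteM n).map Complex.ofRealHom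

/-- `H_2(ix)` as a polynomial in `x`. -/
noncomputable def hermiteSeed : Polynomial ℂ := (hermiteC 2).comp (C Complex.I * X)

/-- Type-3 X₂-Hermite polynomials: `Ĥ_0 = 1`, `Ĥ_1 = Ĥ_2 = 0`, and for `n ≥ 3`
`Ĥ_n(x) = (-1/2)·i^{-2}·[H_2(ix)(∂-2x)H_{n-3}(x) - (d/dx)(H_2(ix))·H_{n-3}(x)]`,
with `Ĥ_m = 0` for `m < 0`. -/
noncomputable def XH3 : ℤ → Polynomial ℂ := fun m =>
  if m = 0 then 1 else if m < 3 then 0 else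
    C ((-1/2 : ℂ) * Complex.I ^ (-2 : ℤ)) *
      (hermiteSeed * (derivative (hermiteC (m - 3).toNat)
          - 2 * X * hermiteC (m - 3).toNat)
        - derivative hermiteSeed * hermiteC (m - 3).toNat)

/-! ### Auxiliary lemmas -/

noncomputable def ht (n m : ℕ) : Polynomial ℝ :=
  C ((-1/4 : ℝ)^m * n.factorial / (m.factorial * (n - 2*m).factorial)) * X ^ (n - 2*m)

lemma hM_guard (n : ℕ) :
    hermiteM n = ∑ m ∈ Finset.range (n+1), if 2*m ≤ n then ht n m else 0 := by
  rw [hermiteM]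
  rw [show (∑ m ∈ Finset.range (n/2+1),
    C ((-1/4 : ℝ)^m * n.factorial / (m.factorial * (n - 2*m).factorial)) * X ^ (n - 2*m))
      = ∑ m ∈ Finset.range (n/2+1), if 2*m ≤ n then ht n m else 0 from
    Finset.sum_congr rfl fun m hm => by
      rw [if_pos (by simp at hm; omega)]; rfl]
  exact Finset.sum_subset (Finset.range_subset_range.2 (by omega))
    (fun m hm hm' => by simp at hm hm'; rw [if_neg (by omega)])

lemma factR (k : ℕ) : ((k+1).factorial : ℝ) = ((k:ℝ)+1) * (k.factorial : ℝ) := by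
  push_cast [Nat.factorial_succ]; ring

lemma factNZ (k : ℕ) : ((k.factorial : ℝ)) ≠ 0 := by
  exact_mod_cast Nat.factorial_ne_zero k

lemma hM_deriv (n : ℕ) : derivative (hermiteM (n+1)) = C ((n:ℝ)+1) * hermiteM n := by
  rw [hM_guard (n+1), hM_guard n, derivative_sum, Finset.mul_sum]
  rw [show (∑ m ∈ Finset.range (n+1), C ((n:ℝ)+1) * (if 2*m ≤ n then ht n m else 0))
      = ∑ m ∈ Finset.range (n+2), C ((n:ℝ)+1) * (if 2*m ≤ n then ht n m else 0) from
    Finset.sum_subset (Finset.range_subset_range.2 (by omega))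
      (fun m hm hm' => by simp at hm hm'; rw [if_neg (by omega), mul_zero])]
  apply Finset.sum_congr rfl
  intro m _
  split_ifs with h1 h2 h2
  · obtain ⟨s, rfl⟩ := Nat.exists_eq_add_of_le h2
    simp only [ht, show 2*m+s+1-2*m = s+1 by omega, show 2*m+s-2*m = s by omega]
    rw [derivative_C_mul, derivative_X_pow]
    rw [← mul_assoc, ← C_mul, ← mul_assoc, ← C_mul]
    have h3 : ((s:ℝ)+1) ≠ 0 := by positivity
    congr 2
    push_cast [Nat.factorial_succ]
    field_simp
  · rw [ht, show n+1-2*m = 0 by omega]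
    simp
  · omega
  · simp

lemma hM_rec (n : ℕ) : hermiteM (n+2) = X * hermiteM (n+1) - C (((n:ℝ)+1)/2) * hermiteM n := by
  rw [hM_guard (n+2), hM_guard (n+1), hM_guard n, Finset.mul_sum, Finset.mul_sum]
  have e1 : (∑ m ∈ Finset.range (n+2), X * (if 2*m ≤ n+1 then ht (n+1) m else 0))
      = ∑ m ∈ Finset.range (n+3), X * (if 2*m ≤ n+1 then ht (n+1) m else 0) := by
    apply Finset.sum_subset (Finset.range_subset_range.2 (by omega))
    intro m hm hm'; simp at hm hm'; rw [if_neg (by omega), mul_zero]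
  have e2 : (∑ m ∈ Finset.range (n+1), C (((n:ℝ)+1)/2) * (if 2*m ≤ n then ht n m else 0))
      = ∑ m ∈ Finset.range (n+3), (if m = 0 then 0 else
          C (((n:ℝ)+1)/2) * (if 2*(m-1) ≤ n then ht n (m-1) else 0)) := by
    rw [Finset.sum_range_succ' _ (n+2)]
    simp only [if_neg (Nat.succ_ne_zero _), if_pos rfl, Nat.add_sub_cancel, add_zero,
      if_true, eq_self_iff_true]
    apply Finset.sum_subset (Finset.range_subset_range.2 (by omega))
    intro m hm hm'; simp at hm hm'; rw [if_neg (by omega), mul_zero]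
  rw [e1, e2]
  rw [← Finset.sum_sub_distrib]
  apply Finset.sum_congr rfl
  intro m _
  match m with
  | 0 =>
    rw [if_pos (by omega), if_pos (by omega), if_pos rfl, sub_zero, ht, ht]
    norm_num
    rw [div_self (factNZ (n+2)), div_self (factNZ (n+1))]
    ring
  | j+1 =>
    rw [if_neg (Nat.succ_ne_zero _), Nat.add_sub_cancel]
    by_cases h1 : 2*j+1 ≤ n
    · obtain ⟨s, rfl⟩ := Nat.exists_eq_add_of_le h1
      rw [if_pos (by omega), if_pos (by omega), if_pos (by omega)]
      simp only [ht, show 2*j+1+s+2 - 2*(j+1) = s+1 by omega,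
        show 2*j+1+s+1 - 2*(j+1) = s by omega, show 2*j+1+s - 2*j = s+1 by omega]
      have key : (-1/4 : ℝ)^(j+1) * (2*j+1+s+2).factorial / ((j+1).factorial * (s+1).factorial)
          = (-1/4 : ℝ)^(j+1) * (2*j+1+s+1).factorial / ((j+1).factorial * (s).factorial)
            - (((2*j+1+s : ℕ):ℝ)+1)/2 * ((-1/4 : ℝ)^(j) * (2*j+1+s).factorial / ((j).factorial * (s+1).factorial)) := by
        rw [show 2*j+1+s+2 = (2*j+1+s+1)+1 by omega]
        rw [factR (2*j+1+s+1), factR (2*j+1+s), factR s, factR j]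
        have := factNZ s; have := factNZ j; have := factNZ (2*j+1+s)
        field_simp
        push_cast; ring
      rw [key, C_sub, C_mul]
      ring
    · by_cases h2 : 2*j = n
      · rw [if_pos (by omega), if_neg (by omega), if_pos (by omega)]
        subst h2
        simp only [ht, show 2*j+2 - 2*(j+1) = 0 by omega, show 2*j - 2*j = 0 by omega]
        have key : (-1/4 : ℝ)^(j+1) * (2*j+2).factorial / ((j+1).factorial * (0).factorial)
            = - ((((2*j : ℕ):ℝ)+1)/2 * ((-1/4 : ℝ)^(j) * (2*j).factorial / ((j).factorial * (0).factorial))) := by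
          rw [show 2*j+2 = (2*j+1)+1 by omega, factR (2*j+1), factR (2*j), factR j]
          have := factNZ j; have := factNZ (2*j)
          field_simp
          push_cast; ring
        rw [key, C_neg, C_mul]
        ring
      · rw [if_neg (by omega), if_neg (by omega), if_neg (by omega)]
        simp

lemma hM_zero : hermiteM 0 = 1 := by simp [hermiteM]

lemma hM_one : hermiteM 1 = X := by simp [hermiteM]

lemma hM_two : hermiteM 2 = X^2 - C (1/2:ℝ) := by
  simp [hermiteM, Finset.sum_range_succ, Nat.factorial]
  rw [← C_mul]
  norm_num
  ring

lemma hC_zero : hermiteC 0 = 1 := by simp [hermiteC, hM_zero]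

lemma hC_one : hermiteC 1 = X := by simp [hermiteC, hM_one]

lemma hC_rec (n : ℕ) : hermiteC (n+2) = X * hermiteC (n+1) - C (((n:ℂ)+1)/2) * hermiteC n := by
  unfold hermiteC
  rw [hM_rec, Polynomial.map_sub, Polynomial.map_mul, Polynomial.map_mul, map_X, map_C]
  norm_num

lemma hC_deriv (n : ℕ) : derivative (hermiteC (n+1)) = C ((n:ℂ)+1) * hermiteC n := by
  unfold hermiteC
  rw [derivative_map, hM_deriv, Polynomial.map_mul, map_C]
  norm_num

lemma seed_eq : hermiteSeed = -(X^2) - C (1/2:ℂ) := by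
  unfold hermiteSeed hermiteC
  rw [hM_two, Polynomial.map_sub, Polynomial.map_pow, map_X, map_C, sub_comp, pow_comp, X_comp,
    C_comp, mul_pow, ← C_pow, Complex.I_sq]
  norm_num

lemma seed_deriv : derivative hermiteSeed = C (-2:ℂ) * X := by
  rw [seed_eq]
  simp
  rw [← C_1, ← C_add]; norm_num

lemma XH3_const : ((-1/2 : ℂ) * Complex.I ^ (-2 : ℤ)) = 1/2 := by
  have h : ((-2:ℤ)) = -((2:ℕ):ℤ) := rfl
  rw [h, zpow_neg, zpow_natCast, Complex.I_sq]
  norm_num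

/-- The simplified form of `XH3 (j+3)`. -/
noncomputable def G (j : ℕ) : Polynomial ℂ :=
  (X^3 + C (3/2:ℂ) * X) * hermiteC j
    - C (1/2:ℂ) * ((X^2 + C (1/2:ℂ)) * derivative (hermiteC j))

lemma XH3_eq (j : ℕ) : XH3 ((j:ℤ)+3) = G j := by
  show (if ((j:ℤ)+3) = 0 then 1 else if ((j:ℤ)+3) < 3 then 0 else _) = G j
  rw [if_neg (by omega), if_neg (by omega), show ((j:ℤ)+3-3).toNat = j by simp,
    XH3_const, seed_deriv, seed_eq, G]
  apply Polynomial.funext; intro x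
  simp only [eval_add, eval_sub, eval_mul, eval_pow, eval_C, eval_X, eval_neg, eval_ofNat]
  ring

lemma XH3_zero : XH3 0 = 1 := by simp [XH3]

lemma XH3_neg (m : ℤ) (h : m ≠ 0) (h' : m < 3) : XH3 m = 0 := by
  simp [XH3, h, h']

lemma evalG (x : ℂ) (j : ℕ) : eval x (G j)
    = (x^3 + 3/2*x) * eval x (hermiteC j)
      - 1/2*((x^2+1/2) * eval x (derivative (hermiteC j))) := by
  simp [G]

lemma evalR (x : ℂ) (j k l : ℕ) (h1 : j = l+2) (h2 : k = l+1) :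
    eval x (hermiteC j) = x * eval x (hermiteC k) - (((l:ℂ))+1)/2 * eval x (hermiteC l) := by
  subst h1; subst h2
  rw [hC_rec]
  simp

lemma evalD (x : ℂ) (j k : ℕ) (h : j = k+1) :
    eval x (derivative (hermiteC j)) = ((k:ℂ)+1) * eval x (hermiteC k) := by
  subst h
  rw [hC_deriv]
  simp

lemma evalC0 (x : ℂ) : eval x (hermiteC 0) = 1 := by rw [hC_zero]; simp

lemma evalC1 (x : ℂ) : eval x (hermiteC 1) = x := by rw [hC_one]; simp

lemma evalD0 (x : ℂ) : eval x (derivative (hermiteC 0)) = 0 := by rw [hC_zero]; simp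

/-- seven-term recurrence for the type-3 X₂-Hermite polynomials,
for all `n ≥ 0` with `n ∉ {1,2}`. -/
theorem X2_hermite_typeIII_recurrence (n : ℤ) (hn : 0 ≤ n) (h1 : n ≠ 1) (h2 : n ≠ 2) :
    (X^3 + C (3/2 : ℂ) * X) * XH3 n
      = XH3 (n + 3)
        + C ((3/2 : ℂ) * (n : ℂ)) * XH3 (n + 1)
        + C ((3/4 : ℂ) * (n : ℂ) * ((n : ℂ) - 3)) * XH3 (n - 1)
        + C ((1/8 : ℂ) * (n : ℂ) * ((n : ℂ) - 4) * ((n : ℂ) - 5)) * XH3 (n - 3) := by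
  lift n to ℕ using hn with a
  have ha1 : a ≠ 1 := by exact_mod_cast h1
  have ha2 : a ≠ 2 := by exact_mod_cast h2
  rcases Nat.lt_or_ge a 7 with h | h
  · interval_cases a
    · -- a = 0
      rw [show ((0:ℕ):ℤ) = 0 by norm_num]
      rw [XH3_zero, show (0+3:ℤ) = (0:ℕ)+3 by norm_num, XH3_eq,
        XH3_neg (0+1) (by omega) (by omega), XH3_neg (0-1) (by omega) (by omega),
        XH3_neg (0-3) (by omega) (by omega)]
      apply Polynomial.funext; intro x
      simp only [evalG, eval_add, eval_sub, eval_mul, eval_pow, eval_C, eval_X, eval_one,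
        eval_zero, mul_zero, mul_one, zero_mul, add_zero, zero_add,
        evalD0 x, evalC0 x]
      ring
    · simp at ha1
    · simp at ha2
    · -- a = 3
      rw [show ((3:ℕ):ℤ) = (0:ℕ)+3 by norm_num, XH3_eq,
        show ((0:ℕ):ℤ)+3+3 = (3:ℕ)+3 by norm_num, XH3_eq,
        show ((0:ℕ):ℤ)+3+1 = (1:ℕ)+3 by norm_num, XH3_eq,
        show ((0:ℕ):ℤ)+3-1 = 2 by norm_num, XH3_neg 2 (by omega) (by omega),
        show ((0:ℕ):ℤ)+3-3 = 0 by norm_num, XH3_zero]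
      apply Polynomial.funext; intro x
      simp only [evalG, eval_add, eval_sub, eval_mul, eval_pow, eval_C, eval_X, eval_one,
        eval_zero, mul_zero, mul_one, zero_mul, add_zero, zero_add]
      simp only [evalD x 3 2 (by norm_num), evalD x 2 1 (by norm_num), evalD x 1 0 (by norm_num),
        evalD0 x, evalR x 3 2 1 (by norm_num) (by norm_num), evalR x 2 1 0 (by norm_num) (by norm_num),
        evalC0 x, evalC1 x]
      push_cast
      ring
    · -- a = 4
      rw [show ((4:ℕ):ℤ) = (1:ℕ)+3 by norm_num, XH3_eq,
        show ((1:ℕ):ℤ)+3+3 = (4:ℕ)+3 by norm_num, XH3_eq,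
        show ((1:ℕ):ℤ)+3+1 = (2:ℕ)+3 by norm_num, XH3_eq,
        show ((1:ℕ):ℤ)+3-1 = (0:ℕ)+3 by norm_num, XH3_eq,
        show ((1:ℕ):ℤ)+3-3 = 1 by norm_num, XH3_neg 1 (by omega) (by omega)]
      apply Polynomial.funext; intro x
      simp only [evalG, eval_add, eval_sub, eval_mul, eval_pow, eval_C, eval_X, eval_one,
        eval_zero, mul_zero, mul_one, zero_mul, add_zero, zero_add]
      simp only [evalD x 4 3 (by norm_num), evalD x 3 2 (by norm_num), evalD x 2 1 (by norm_num),
        evalD x 1 0 (by norm_num), evalD0 x,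
        evalR x 4 3 2 (by norm_num) (by norm_num), evalR x 3 2 1 (by norm_num) (by norm_num),
        evalR x 2 1 0 (by norm_num) (by norm_num), evalC0 x, evalC1 x]
      push_cast
      ring
    · -- a = 5
      rw [show ((5:ℕ):ℤ) = (2:ℕ)+3 by norm_num, XH3_eq,
        show ((2:ℕ):ℤ)+3+3 = (5:ℕ)+3 by norm_num, XH3_eq,
        show ((2:ℕ):ℤ)+3+1 = (3:ℕ)+3 by norm_num, XH3_eq,
        show ((2:ℕ):ℤ)+3-1 = (1:ℕ)+3 by norm_num, XH3_eq,
        show ((2:ℕ):ℤ)+3-3 = 2 by norm_num, XH3_neg 2 (by omega) (by omega)]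
      apply Polynomial.funext; intro x
      simp only [evalG, eval_add, eval_sub, eval_mul, eval_pow, eval_C, eval_X, eval_one,
        eval_zero, mul_zero, mul_one, zero_mul, add_zero, zero_add]
      simp only [evalD x 5 4 (by norm_num), evalD x 4 3 (by norm_num), evalD x 3 2 (by norm_num),
        evalD x 2 1 (by norm_num), evalD x 1 0 (by norm_num), evalD0 x,
        evalR x 5 4 3 (by norm_num) (by norm_num), evalR x 4 3 2 (by norm_num) (by norm_num),
        evalR x 3 2 1 (by norm_num) (by norm_num), evalR x 2 1 0 (by norm_num) (by norm_num),
        evalC0 x, evalC1 x]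
      push_cast
      ring
    · -- a = 6
      rw [show ((6:ℕ):ℤ) = (3:ℕ)+3 by norm_num, XH3_eq,
        show ((3:ℕ):ℤ)+3+3 = (6:ℕ)+3 by norm_num, XH3_eq,
        show ((3:ℕ):ℤ)+3+1 = (4:ℕ)+3 by norm_num, XH3_eq,
        show ((3:ℕ):ℤ)+3-1 = (2:ℕ)+3 by norm_num, XH3_eq,
        show ((3:ℕ):ℤ)+3-3 = (0:ℕ)+3 by norm_num, XH3_eq]
      apply Polynomial.funext; intro x
      simp only [evalG, eval_add, eval_sub, eval_mul, eval_pow, eval_C, eval_X, eval_one,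
        eval_zero, mul_zero, mul_one, zero_mul, add_zero, zero_add]
      simp only [evalD x 6 5 (by norm_num), evalD x 5 4 (by norm_num), evalD x 4 3 (by norm_num),
        evalD x 3 2 (by norm_num), evalD x 2 1 (by norm_num), evalD x 1 0 (by norm_num), evalD0 x,
        evalR x 6 5 4 (by norm_num) (by norm_num), evalR x 5 4 3 (by norm_num) (by norm_num),
        evalR x 4 3 2 (by norm_num) (by norm_num), evalR x 3 2 1 (by norm_num) (by norm_num),
        evalR x 2 1 0 (by norm_num) (by norm_num), evalC0 x, evalC1 x]
      push_cast
      ring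
  · obtain ⟨m, hm⟩ := Nat.exists_eq_add_of_le h
    have hm' : a = m + 7 := by omega
    subst hm'
    have A1 : XH3 ((m+7:ℕ):ℤ) = G (m+4) := by
      rw [show (((m+7:ℕ)):ℤ) = ((m+4:ℕ):ℤ)+3 by push_cast; ring]
      exact XH3_eq (m+4)
    have A2 : XH3 (((m+7:ℕ):ℤ)+3) = G (m+7) := XH3_eq (m+7)
    have A3 : XH3 (((m+7:ℕ):ℤ)+1) = G (m+5) := by
      rw [show (((m+7:ℕ)):ℤ)+1 = ((m+5:ℕ):ℤ)+3 by push_cast; ring]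
      exact XH3_eq (m+5)
    have A4 : XH3 (((m+7:ℕ):ℤ)-1) = G (m+3) := by
      rw [show (((m+7:ℕ)):ℤ)-1 = ((m+3:ℕ):ℤ)+3 by push_cast; ring]
      exact XH3_eq (m+3)
    have A5 : XH3 (((m+7:ℕ):ℤ)-3) = G (m+1) := by
      rw [show (((m+7:ℕ)):ℤ)-3 = ((m+1:ℕ):ℤ)+3 by push_cast; ring]
      exact XH3_eq (m+1)
    rw [A1, A2, A3, A4, A5]
    apply Polynomial.funext; intro x
    simp only [evalG, eval_add, eval_sub, eval_mul, eval_pow, eval_C, eval_X, eval_one,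
      eval_zero, mul_zero, mul_one, zero_mul, add_zero, zero_add]
    simp only [evalD x (m+7) (m+6) (by omega), evalD x (m+5) (m+4) (by omega),
      evalD x (m+4) (m+3) (by omega), evalD x (m+3) (m+2) (by omega),
      evalD x (m+1) m (by omega),
      evalR x (m+7) (m+6) (m+5) (by omega) (by omega),
      evalR x (m+6) (m+5) (m+4) (by omega) (by omega),
      evalR x (m+5) (m+4) (m+3) (by omega) (by omega),
      evalR x (m+4) (m+3) (m+2) (by omega) (by omega),
      evalR x (m+3) (m+2) (m+1) (by omega) (by omega),
      evalR x (m+2) (m+1) m (by omega) (by omega)]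
    push_cast
    ring
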